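/- One-step expected descent for SGD-PLRS: if f : ℝ^d → ℝ is β-smooth and x' = x − (η_c + u) g, then E[f(x')] − f(x) ≤ −‖∇f(x)‖² (η_c − (2/3) β η_c²) + (2/3) β η_c² σ². -/

import Mathlib

open MeasureTheory ProbabilityTheory

local notation "⟪" x ", " y "⟫" => @inner ℝ _ _ x y

lemma sgd_plrs_descent_aux {d : ℕ} (f : EuclideanSpace ℝ (Fin d) → ℝ) (β : ℝ)
    (hdiff : Differentiable ℝ f)
    (hsmooth : ∀ a b : EuclideanSpace ℝ (Fin d),
      ‖gradient f a - gradient f b‖ ≤ β * ‖a - b‖)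
    (x y : EuclideanSpace ℝ (Fin d)) :
    |f y - f x - ⟪gradient f x, y - x⟫| ≤ β / 2 * ‖y - x‖ ^ 2 := by
  set v := y - x with hv
  have hphi : ∀ t : ℝ, HasDerivAt (fun t : ℝ => f (x + t • v))
      ⟪gradient f (x + t • v), v⟫ t := by
    intro t
    have hgrad : HasFDerivAt f ((InnerProductSpace.toDual ℝ _) (gradient f (x + t • v)))
        (x + t • v) := by
      have := (hdiff (x + t • v)).hasGradientAt
      rwa [hasGradientAt_iff_hasFDerivAt] at this
    have hline : HasDerivAt (fun t : ℝ => x + t • v) v t := by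
      simpa using ((hasDerivAt_id t).smul_const v).const_add x
    have := hgrad.comp_hasDerivAt t hline
    simpa [InnerProductSpace.toDual_apply_apply, Function.comp_def] using this
  have key : ∀ t : ℝ, 0 ≤ t →
      |⟪gradient f (x + t • v), v⟫ - ⟪gradient f x, v⟫| ≤ β * t * ‖v‖ ^ 2 := by
    intro t ht
    have h1 : ⟪gradient f (x + t • v), v⟫ - ⟪gradient f x, v⟫
        = ⟪gradient f (x + t • v) - gradient f x, v⟫ := by
      rw [inner_sub_left]
    rw [h1]
    calc |⟪gradient f (x + t • v) - gradient f x, v⟫|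
        ≤ ‖gradient f (x + t • v) - gradient f x‖ * ‖v‖ := abs_real_inner_le_norm _ _
      _ ≤ (β * ‖(x + t • v) - x‖) * ‖v‖ := by
          gcongr; exact hsmooth _ _
      _ = β * t * ‖v‖ ^ 2 := by
          simp [norm_smul, abs_of_nonneg ht]; ring
  -- upper bound
  have hupper : f y - f x - ⟪gradient f x, v⟫ ≤ β / 2 * ‖v‖ ^ 2 := by
    set c := ⟪gradient f x, v⟫
    set φ : ℝ → ℝ := fun t => f (x + t • v) - t * c - β / 2 * ‖v‖ ^ 2 * t ^ 2 with hφdef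
    have hd : ∀ t : ℝ, HasDerivAt φ
        (⟪gradient f (x + t • v), v⟫ - c - β * ‖v‖ ^ 2 * t) t := by
      intro t
      have h1 := (hphi t).sub ((hasDerivAt_id t).mul_const c)
      simp only [id_eq, one_mul] at h1
      have h2 : HasDerivAt (fun t : ℝ => β / 2 * ‖v‖ ^ 2 * t ^ 2)
          (β / 2 * ‖v‖ ^ 2 * (2 * t)) t := by
        simpa using ((hasDerivAt_pow 2 t).const_mul (β / 2 * ‖v‖ ^ 2))
      have h3 := h1.sub h2
      convert h3 using 1
      all_goals (try rfl)
      ring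
    have hanti : AntitoneOn φ (Set.Icc 0 1) := by
      apply antitoneOn_of_deriv_nonpos (convex_Icc 0 1)
      · exact fun t _ => ((hd t).continuousAt).continuousWithinAt
      · exact fun t _ => ((hd t).differentiableAt).differentiableWithinAt
      · intro t ht
        rw [interior_Icc] at ht
        rw [(hd t).deriv]
        have := key t ht.1.le
        have h2 := (abs_le.mp this).2
        nlinarith [ht.1.le]
    have h01 : φ 1 ≤ φ 0 := hanti (by norm_num) (by norm_num) zero_le_one
    simp only [hφdef, one_smul, zero_smul, add_zero, one_pow, one_mul, zero_mul, sub_zero,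
      mul_zero, zero_pow] at h01
    have hxy : x + v = y := by rw [hv]; abel
    rw [hxy] at h01
    linarith
  -- lower bound
  have hlower : -(β / 2 * ‖v‖ ^ 2) ≤ f y - f x - ⟪gradient f x, v⟫ := by
    set c := ⟪gradient f x, v⟫
    set φ : ℝ → ℝ := fun t => f (x + t • v) - t * c + β / 2 * ‖v‖ ^ 2 * t ^ 2 with hφdef
    have hd : ∀ t : ℝ, HasDerivAt φ
        (⟪gradient f (x + t • v), v⟫ - c + β * ‖v‖ ^ 2 * t) t := by
      intro t
      have h1 := (hphi t).sub ((hasDerivAt_id t).mul_const c)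
      simp only [id_eq, one_mul] at h1
      have h2 : HasDerivAt (fun t : ℝ => β / 2 * ‖v‖ ^ 2 * t ^ 2)
          (β / 2 * ‖v‖ ^ 2 * (2 * t)) t := by
        simpa using ((hasDerivAt_pow 2 t).const_mul (β / 2 * ‖v‖ ^ 2))
      have h3 := h1.add h2
      convert h3 using 1
      all_goals (try rfl)
      ring
    have hmono : MonotoneOn φ (Set.Icc 0 1) := by
      apply monotoneOn_of_deriv_nonneg (convex_Icc 0 1)
      · exact fun t _ => ((hd t).continuousAt).continuousWithinAt
      · exact fun t _ => ((hd t).differentiableAt).differentiableWithinAt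
      · intro t ht
        rw [interior_Icc] at ht
        rw [(hd t).deriv]
        have := key t ht.1.le
        have h2 := (abs_le.mp this).1
        nlinarith [ht.1.le]
    have h01 : φ 0 ≤ φ 1 := hmono (by norm_num) (by norm_num) zero_le_one
    simp only [hφdef, one_smul, zero_smul, add_zero, one_pow, one_mul, zero_mul, sub_zero,
      mul_zero, zero_pow] at h01
    have hxy : x + v = y := by rw [hv]; abel
    rw [hxy] at h01
    linarith
  rw [abs_le]
  exact ⟨hlower, hupper⟩

lemma sgd_plrs_unif_integral {Ω : Type} [MeasurableSpace Ω] {μ : Measure Ω} {a b : ℝ}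
    (hab : a < b) {u : Ω → ℝ} (hu : pdf.IsUniform u (Set.Icc a b) μ volume)
    (h : ℝ → ℝ) (hh : Continuous h) :
    ∫ ω, h (u ω) ∂μ = (b - a)⁻¹ * ∫ t in Set.Icc a b, h t := by
  have hvol : volume (Set.Icc a b) = ENNReal.ofReal (b - a) := Real.volume_Icc
  have hns : volume (Set.Icc a b) ≠ 0 := by
    rw [hvol]; simp [ENNReal.ofReal_eq_zero]; linarith
  have hnt : volume (Set.Icc a b) ≠ ⊤ := by rw [hvol]; exact ENNReal.ofReal_ne_top
  have am : AEMeasurable u μ := hu.aemeasurable hns hnt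
  calc ∫ ω, h (u ω) ∂μ = ∫ t, h t ∂(Measure.map u μ) :=
        (integral_map am hh.aestronglyMeasurable).symm
    _ = ∫ t, h t ∂((volume (Set.Icc a b))⁻¹ • volume.restrict (Set.Icc a b)) := by
        rw [hu]; rfl
    _ = ((volume (Set.Icc a b))⁻¹).toReal • ∫ t in Set.Icc a b, h t :=
        integral_smul_measure _ _
    _ = (b - a)⁻¹ * ∫ t in Set.Icc a b, h t := by
        rw [hvol, ← ENNReal.ofReal_inv_of_pos (by linarith)]
        rw [ENNReal.toReal_ofReal (inv_nonneg.mpr (by linarith))]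
        rfl

lemma sgd_plrs_unif_mem {Ω : Type} [MeasurableSpace Ω] {μ : Measure Ω} {a b : ℝ}
    (hab : a < b) {u : Ω → ℝ} (hu : pdf.IsUniform u (Set.Icc a b) μ volume) :
    ∀ᵐ ω ∂μ, u ω ∈ Set.Icc a b := by
  have hvol : volume (Set.Icc a b) = ENNReal.ofReal (b - a) := Real.volume_Icc
  have hns : volume (Set.Icc a b) ≠ 0 := by
    rw [hvol]; simp [ENNReal.ofReal_eq_zero]; linarith
  have hnt : volume (Set.Icc a b) ≠ ⊤ := by rw [hvol]; exact ENNReal.ofReal_ne_top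
  have := hu.measure_preimage hns hnt (measurableSet_Icc (a := a) (b := b)).compl
  rw [Set.inter_compl_self] at this
  simp only [measure_empty, ENNReal.zero_div] at this
  rw [ae_iff]
  exact this

lemma sgd_plrs_unif_aemeasurable {Ω : Type} [MeasurableSpace Ω] {μ : Measure Ω} {a b : ℝ}
    (hab : a < b) {u : Ω → ℝ} (hu : pdf.IsUniform u (Set.Icc a b) μ volume) :
    AEMeasurable u μ := by
  have hvol : volume (Set.Icc a b) = ENNReal.ofReal (b - a) := Real.volume_Icc
  have hns : volume (Set.Icc a b) ≠ 0 := by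
    rw [hvol]; simp [ENNReal.ofReal_eq_zero]; linarith
  have hnt : volume (Set.Icc a b) ≠ ⊤ := by rw [hvol]; exact ENNReal.ofReal_ne_top
  exact hu.aemeasurable hns hnt

lemma sgd_plrs_arith {β ηc σ E2 S N : ℝ} (hβ : 0 ≤ β) (hE2_le : E2 ≤ 4 / 3 * ηc ^ 2)
    (hGn : 0 ≤ N) (hS : 0 ≤ S) (hσ : S ≤ σ ^ 2) :
    -(ηc * N) + β / 2 * (E2 * (N + S)) ≤
      -N * (ηc - 2 / 3 * β * ηc ^ 2) + 2 / 3 * β * ηc ^ 2 * σ ^ 2 := by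
  have hb : 0 ≤ (2:ℝ) / 3 * β * ηc ^ 2 :=
    mul_nonneg (mul_nonneg (by norm_num) hβ) (sq_nonneg ηc)
  have h1 : β / 2 * (E2 * (N + S)) ≤ β / 2 * (4 / 3 * ηc ^ 2 * (N + S)) :=
    mul_le_mul_of_nonneg_left
      (mul_le_mul_of_nonneg_right hE2_le (add_nonneg hGn hS)) (by linarith)
  have h2 : (2:ℝ) / 3 * β * ηc ^ 2 * S ≤ 2 / 3 * β * ηc ^ 2 * σ ^ 2 :=
    mul_le_mul_of_nonneg_left hσ hb
  have h3 : β / 2 * (4 / 3 * ηc ^ 2 * (N + S))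
      = 2 / 3 * β * ηc ^ 2 * N + 2 / 3 * β * ηc ^ 2 * S := by ring
  have h4 : -N * (ηc - 2 / 3 * β * ηc ^ 2)
      = -(ηc * N) + 2 / 3 * β * ηc ^ 2 * N := by ring
  linarith

/-- **One-step expected descent for SGD-PLRS.** If `f` is `β`-smooth and
`x' = x - (ηc + u) • g` with `ηc = (Lmin + Lmax)/2`, `u` uniform on `[Lmin - ηc, Lmax - ηc]`,
and `g` a stochastic gradient at `x` independent of `u` with mean `∇f(x)` and
`E[‖g - ∇f(x)‖²] ≤ σ²`, then
`E[f(x')] - f(x) ≤ -‖∇f(x)‖² (ηc - (2/3) β ηc²) + (2/3) β ηc² σ²`. -/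
theorem sgd_plrs_one_step_descent
    {Ω : Type} [MeasurableSpace Ω] (μ : Measure Ω) [IsProbabilityMeasure μ]
    {d : ℕ} (f : EuclideanSpace ℝ (Fin d) → ℝ) (β σ : ℝ) (hβ : 0 ≤ β)
    (hdiff : Differentiable ℝ f)
    (hsmooth : ∀ a b : EuclideanSpace ℝ (Fin d),
      ‖gradient f a - gradient f b‖ ≤ β * ‖a - b‖)
    (x : EuclideanSpace ℝ (Fin d))
    (Lmin Lmax ηc : ℝ)
    (hLmin : 0 < Lmin) (hLL : Lmin < Lmax) (hLmax : Lmax < 1)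
    (hηc : ηc = (Lmin + Lmax) / 2)
    (u : Ω → ℝ) (g : Ω → EuclideanSpace ℝ (Fin d))
    (hu : pdf.IsUniform u (Set.Icc (Lmin - ηc) (Lmax - ηc)) μ volume)
    (hindep : IndepFun u g μ)
    (hg_int : Integrable g μ)
    (hg2_int : Integrable (fun ω => ‖g ω‖ ^ 2) μ)
    (hg_mean : ∫ ω, g ω ∂μ = gradient f x)
    (hσ : ∫ ω, ‖g ω - gradient f x‖ ^ 2 ∂μ ≤ σ ^ 2)
    (x' : Ω → EuclideanSpace ℝ (Fin d))
    (hx' : ∀ ω, x' ω = x - (ηc + u ω) • g ω) :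
    ∫ ω, f (x' ω) ∂μ - f x ≤
      -‖gradient f x‖ ^ 2 * (ηc - (2 / 3) * β * ηc ^ 2) + (2 / 3) * β * ηc ^ 2 * σ ^ 2 := by
  have hab : Lmin - ηc < Lmax - ηc := by linarith
  have hLmaxpos : (0:ℝ) < Lmax := lt_trans hLmin hLL
  have hηcpos : 0 < ηc := by rw [hηc]; linarith
  set G := gradient f x with hG
  have hmem : ∀ᵐ ω ∂μ, u ω ∈ Set.Icc (Lmin - ηc) (Lmax - ηc) := sgd_plrs_unif_mem hab hu
  have am_u : AEMeasurable u μ := sgd_plrs_unif_aemeasurable hab hu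
  have hgm : AEStronglyMeasurable g μ := hg_int.1
  have hinner_int : Integrable (fun ω => ⟪G, g ω⟫) μ := hg_int.const_inner G
  -- integrability of the (ηc+u)-products
  have hAm : AEStronglyMeasurable (fun ω => (ηc + u ω) * ⟪G, g ω⟫) μ :=
    ((aemeasurable_const.add am_u).mul hinner_int.1.aemeasurable).aestronglyMeasurable
  have hA_int : Integrable (fun ω => (ηc + u ω) * ⟪G, g ω⟫) μ := by
    refine Integrable.mono' (hinner_int.norm.const_mul Lmax) hAm ?_
    filter_upwards [hmem] with ω hω
    have h1 : |ηc + u ω| ≤ Lmax := by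
      rw [abs_le]; constructor <;> [linarith [hω.1]; linarith [hω.2]]
    rw [Real.norm_eq_abs, abs_mul, Real.norm_eq_abs]
    exact mul_le_mul_of_nonneg_right h1 (abs_nonneg _)
  have hBm : AEStronglyMeasurable (fun ω => (ηc + u ω) ^ 2 * ‖g ω‖ ^ 2) μ :=
    (((aemeasurable_const.add am_u).pow_const 2).mul
      ((hgm.norm.aemeasurable).pow_const 2)).aestronglyMeasurable
  have hB_int : Integrable (fun ω => (ηc + u ω) ^ 2 * ‖g ω‖ ^ 2) μ := by
    refine Integrable.mono' (hg2_int.const_mul (Lmax ^ 2)) hBm ?_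
    filter_upwards [hmem] with ω hω
    have h1 : (ηc + u ω) ^ 2 ≤ Lmax ^ 2 := by nlinarith [hω.1, hω.2]
    rw [Real.norm_eq_abs, abs_mul, abs_of_nonneg (sq_nonneg (ηc + u ω)),
      abs_of_nonneg (sq_nonneg ‖g ω‖)]
    exact mul_le_mul_of_nonneg_right h1 (sq_nonneg _)
  -- key pointwise facts from smoothness
  have hkey : ∀ ω, |f (x' ω) - f x + (ηc + u ω) * ⟪G, g ω⟫|
      ≤ β / 2 * ((ηc + u ω) ^ 2 * ‖g ω‖ ^ 2) := by
    intro ω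
    have h := sgd_plrs_descent_aux f β hdiff hsmooth x (x' ω)
    have hsub : x' ω - x = -((ηc + u ω) • g ω) := by rw [hx']; abel
    rw [hsub] at h
    rw [inner_neg_right, real_inner_smul_right] at h
    rw [norm_neg, norm_smul] at h
    convert h using 2
    · ring
    · rw [Real.norm_eq_abs, mul_pow, sq_abs]
  -- integrability of f ∘ x'
  have hfx'm : AEStronglyMeasurable (fun ω => f (x' ω)) μ := by
    have hx'm : AEStronglyMeasurable x' μ := by
      refine AEStronglyMeasurable.congr ?_ (Filter.Eventually.of_forall fun ω => (hx' ω).symm)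
      exact aestronglyMeasurable_const.sub
        (((aemeasurable_const.add am_u).aestronglyMeasurable).smul hgm)
    exact hdiff.continuous.comp_aestronglyMeasurable hx'm
  have hfx'_int : Integrable (fun ω => f (x' ω)) μ := by
    refine Integrable.mono'
      (((integrable_const |f x|).add (hinner_int.norm.const_mul Lmax)).add
        ((hg2_int.const_mul (Lmax ^ 2)).const_mul (β / 2))) hfx'm ?_
    filter_upwards [hmem] with ω hω
    have h := hkey ω
    have h1 : |ηc + u ω| ≤ Lmax := by
      rw [abs_le]; constructor <;> [linarith [hω.1]; linarith [hω.2]]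
    have h2 : (ηc + u ω) ^ 2 ≤ Lmax ^ 2 := by nlinarith [hω.1, hω.2]
    have h6 : β / 2 * ((ηc + u ω) ^ 2 * ‖g ω‖ ^ 2) ≤ β / 2 * (Lmax ^ 2 * ‖g ω‖ ^ 2) := by
      have := mul_le_mul_of_nonneg_right h2 (sq_nonneg ‖g ω‖)
      nlinarith [hβ]
    have hA5 : |(ηc + u ω) * ⟪G, g ω⟫| ≤ Lmax * |⟪G, g ω⟫| := by
      rw [abs_mul]; exact mul_le_mul_of_nonneg_right h1 (abs_nonneg _)
    have htri : |f (x' ω)| ≤ |f (x' ω) - f x + (ηc + u ω) * ⟪G, g ω⟫| + |f x|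
        + |(ηc + u ω) * ⟪G, g ω⟫| := by
      have e : f (x' ω) = (f (x' ω) - f x + (ηc + u ω) * ⟪G, g ω⟫) + f x
          - (ηc + u ω) * ⟪G, g ω⟫ := by ring
      calc |f (x' ω)| = |(f (x' ω) - f x + (ηc + u ω) * ⟪G, g ω⟫) + f x
          - (ηc + u ω) * ⟪G, g ω⟫| := by rw [← e]
        _ ≤ |(f (x' ω) - f x + (ηc + u ω) * ⟪G, g ω⟫) + f x|
            + |(ηc + u ω) * ⟪G, g ω⟫| := abs_sub _ _
        _ ≤ |f (x' ω) - f x + (ηc + u ω) * ⟪G, g ω⟫| + |f x|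
            + |(ηc + u ω) * ⟪G, g ω⟫| := by
              have := abs_add_le (f (x' ω) - f x + (ηc + u ω) * ⟪G, g ω⟫) (f x)
              linarith
    simp only [Pi.add_apply]
    rw [Real.norm_eq_abs, Real.norm_eq_abs]
    linarith
  -- a.e. pointwise descent inequality
  have hptwise : ∀ ω, f (x' ω) - f x ≤
      -((ηc + u ω) * ⟪G, g ω⟫) + β / 2 * ((ηc + u ω) ^ 2 * ‖g ω‖ ^ 2) := by
    intro ω
    have h := (abs_le.mp (hkey ω)).2
    linarith
  -- expectations of uniform moments
  have hE1 : ∫ ω, (ηc + u ω) ∂μ = ηc := by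
    have := sgd_plrs_unif_integral hab hu (fun t => ηc + t) (continuous_const.add continuous_id)
    rw [this]
    have hI : ∫ t in Set.Icc (Lmin - ηc) (Lmax - ηc), (ηc + t) = (Lmax ^ 2 - Lmin ^ 2) / 2 := by
      rw [MeasureTheory.integral_Icc_eq_integral_Ioc, ← intervalIntegral.integral_of_le hab.le]
      simp_rw [add_comm ηc]
      rw [intervalIntegral.integral_comp_add_right (fun s => s) ηc]
      have e1 : Lmin - ηc + ηc = Lmin := by ring
      have e2 : Lmax - ηc + ηc = Lmax := by ring
      rw [e1, e2, integral_id]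
    rw [hI]
    have hba : Lmax - ηc - (Lmin - ηc) = Lmax - Lmin := by ring
    rw [hba, inv_mul_eq_div, div_eq_iff (by linarith : Lmax - Lmin ≠ 0)]
    rw [hηc]; ring
  have hE2_le : ∫ ω, (ηc + u ω) ^ 2 ∂μ ≤ 4 / 3 * ηc ^ 2 := by
    have := sgd_plrs_unif_integral hab hu (fun t => (ηc + t) ^ 2)
      ((continuous_const.add continuous_id).pow 2)
    rw [this]
    have hI : ∫ t in Set.Icc (Lmin - ηc) (Lmax - ηc), (ηc + t) ^ 2
        = (Lmax ^ 3 - Lmin ^ 3) / 3 := by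
      rw [MeasureTheory.integral_Icc_eq_integral_Ioc, ← intervalIntegral.integral_of_le hab.le]
      simp_rw [add_comm ηc]
      rw [intervalIntegral.integral_comp_add_right (fun s => s ^ 2) ηc]
      have e1 : Lmin - ηc + ηc = Lmin := by ring
      have e2 : Lmax - ηc + ηc = Lmax := by ring
      rw [e1, e2, integral_pow]
      norm_num
    rw [hI]
    have hba : Lmax - ηc - (Lmin - ηc) = Lmax - Lmin := by ring
    rw [hba, inv_mul_eq_div, div_le_iff₀ (by linarith : (0:ℝ) < Lmax - Lmin)]
    rw [hηc]
    nlinarith [mul_pos hLmin (sub_pos.mpr hLL)]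
  have hE2_nonneg : 0 ≤ ∫ ω, (ηc + u ω) ^ 2 ∂μ :=
    integral_nonneg fun ω => sq_nonneg _
  have hu1_int : Integrable (fun ω => ηc + u ω) μ := by
    refine Integrable.mono' (integrable_const Lmax) (aemeasurable_const.add am_u).aestronglyMeasurable ?_
    filter_upwards [hmem] with ω hω
    rw [Real.norm_eq_abs, abs_le]; constructor <;> [linarith [hω.1]; linarith [hω.2]]
  have hu2_int : Integrable (fun ω => (ηc + u ω) ^ 2) μ := by
    refine Integrable.mono' (integrable_const (Lmax ^ 2))
      ((aemeasurable_const.add am_u).pow_const 2).aestronglyMeasurable ?_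
    filter_upwards [hmem] with ω hω
    rw [Real.norm_eq_abs, abs_of_nonneg (sq_nonneg _)]
    nlinarith [hω.1, hω.2]
  -- independence splits
  have hinner_mean : ∫ ω, ⟪G, g ω⟫ ∂μ = ‖G‖ ^ 2 := by
    rw [integral_inner hg_int G, hg_mean, real_inner_self_eq_norm_sq]
  have hsplit1 : ∫ ω, (ηc + u ω) * ⟪G, g ω⟫ ∂μ = ηc * ‖G‖ ^ 2 := by
    have hφ : Measurable fun t : ℝ => ηc + t := measurable_const.add measurable_id
    have hψ : Measurable fun y : EuclideanSpace ℝ (Fin d) => (⟪G, y⟫ : ℝ) :=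
      (Continuous.inner continuous_const continuous_id).measurable
    have hi : IndepFun (fun ω => ηc + u ω) (fun ω => ⟪G, g ω⟫) μ :=
      hindep.comp hφ hψ
    have := hi.integral_mul_eq_mul_integral hu1_int.1 hinner_int.1
    have e : ∫ ω, (ηc + u ω) * ⟪G, g ω⟫ ∂μ
        = integral μ ((fun ω => ηc + u ω) * fun ω => ⟪G, g ω⟫) := rfl
    rw [e, this, hE1, hinner_mean]
  have hsplit2 : ∫ ω, (ηc + u ω) ^ 2 * ‖g ω‖ ^ 2 ∂μ
      = (∫ ω, (ηc + u ω) ^ 2 ∂μ) * ∫ ω, ‖g ω‖ ^ 2 ∂μ := by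
    have hφ : Measurable fun t : ℝ => (ηc + t) ^ 2 :=
      (measurable_const.add measurable_id).pow_const 2
    have hψ : Measurable fun y : EuclideanSpace ℝ (Fin d) => ‖y‖ ^ 2 :=
      measurable_norm.pow_const 2
    have hi : IndepFun (fun ω => (ηc + u ω) ^ 2) (fun ω => ‖g ω‖ ^ 2) μ :=
      hindep.comp hφ hψ
    have := hi.integral_mul_eq_mul_integral hu2_int.1 hg2_int.1
    have e : ∫ ω, (ηc + u ω) ^ 2 * ‖g ω‖ ^ 2 ∂μ
        = integral μ ((fun ω => (ηc + u ω) ^ 2) * fun ω => ‖g ω‖ ^ 2) := rfl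
    rw [e, this]
  -- variance decomposition
  have hvar : ∫ ω, ‖g ω‖ ^ 2 ∂μ = ‖G‖ ^ 2 + ∫ ω, ‖g ω - G‖ ^ 2 ∂μ := by
    have hpt : ∀ ω, ‖g ω - G‖ ^ 2 = ‖g ω‖ ^ 2 - 2 * ⟪G, g ω⟫ + ‖G‖ ^ 2 := by
      intro ω
      rw [@norm_sub_sq_real (EuclideanSpace ℝ (Fin d))]
      rw [real_inner_comm]
    have e0 : ∫ ω, ‖g ω - G‖ ^ 2 ∂μ
        = ∫ ω, (‖g ω‖ ^ 2 - 2 * ⟪G, g ω⟫ + ‖G‖ ^ 2) ∂μ :=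
      integral_congr_ae (Filter.Eventually.of_forall fun ω => hpt ω)
    have i1 : Integrable (fun ω => ‖g ω‖ ^ 2 - 2 * ⟪G, g ω⟫) μ :=
      hg2_int.sub (hinner_int.const_mul 2)
    have i2 : Integrable (fun ω => 2 * ⟪G, g ω⟫) μ := hinner_int.const_mul 2
    have e1 : ∫ ω, (‖g ω‖ ^ 2 - 2 * ⟪G, g ω⟫ + ‖G‖ ^ 2) ∂μ
        = (∫ ω, ‖g ω‖ ^ 2 ∂μ) - 2 * ‖G‖ ^ 2 + ‖G‖ ^ 2 := by
      rw [integral_add i1 (integrable_const _), integral_sub hg2_int i2,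
        integral_const_mul, hinner_mean, integral_const, probReal_univ]
      simp
    rw [e0, e1]
    ring
  have hS_nonneg : 0 ≤ ∫ ω, ‖g ω - G‖ ^ 2 ∂μ := integral_nonneg fun ω => sq_nonneg _
  -- main chain
  have hmain : ∫ ω, f (x' ω) ∂μ - f x ≤
      ∫ ω, (-((ηc + u ω) * ⟪G, g ω⟫) + β / 2 * ((ηc + u ω) ^ 2 * ‖g ω‖ ^ 2)) ∂μ := by
    have e : ∫ ω, f (x' ω) ∂μ - f x = ∫ ω, (f (x' ω) - f x) ∂μ := by
      rw [integral_sub hfx'_int (integrable_const _), integral_const, probReal_univ]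
      simp
    have i3 : Integrable (fun ω => -((ηc + u ω) * ⟪G, g ω⟫)) μ := hA_int.neg
    have i4 : Integrable (fun ω => β / 2 * ((ηc + u ω) ^ 2 * ‖g ω‖ ^ 2)) μ :=
      hB_int.const_mul _
    have i5 : Integrable (fun ω => f (x' ω) - f x) μ := hfx'_int.sub (integrable_const _)
    rw [e]
    exact integral_mono i5 (i3.add i4) hptwise
  have hval : ∫ ω, (-((ηc + u ω) * ⟪G, g ω⟫) + β / 2 * ((ηc + u ω) ^ 2 * ‖g ω‖ ^ 2)) ∂μ
      = -(ηc * ‖G‖ ^ 2) + β / 2 * ((∫ ω, (ηc + u ω) ^ 2 ∂μ) * ∫ ω, ‖g ω‖ ^ 2 ∂μ) := by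
    have i3 : Integrable (fun ω => -((ηc + u ω) * ⟪G, g ω⟫)) μ := hA_int.neg
    have i4 : Integrable (fun ω => β / 2 * ((ηc + u ω) ^ 2 * ‖g ω‖ ^ 2)) μ :=
      hB_int.const_mul _
    rw [integral_add i3 i4, integral_neg, hsplit1, integral_const_mul, hsplit2]
  rw [hval, hvar] at hmain
  obtain ⟨E2, hE2def⟩ : ∃ E2, ∫ ω, (ηc + u ω) ^ 2 ∂μ = E2 := ⟨_, rfl⟩
  rw [hE2def] at hmain hE2_le hE2_nonneg
  obtain ⟨S, hSdef⟩ : ∃ S, ∫ ω, ‖g ω - G‖ ^ 2 ∂μ = S := ⟨_, rfl⟩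
  rw [hSdef] at hmain hσ hS_nonneg
  obtain ⟨N, hNdef⟩ : ∃ N, ‖G‖ ^ 2 = N := ⟨_, rfl⟩
  rw [hNdef] at hmain ⊢
  have hGn : (0:ℝ) ≤ N := by rw [← hNdef]; exact sq_nonneg _
  exact hmain.trans (sgd_plrs_arith hβ hE2_le hGn hS_nonneg hσ)
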